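/- Let (ω,v) ∈ so(n) × ℝⁿ satisfy ω v = 0. Then the adjoint orbit {Ad_g(ω,v) : g ∈ E(n)} and the coadjoint orbit {Ad*_g(ω,v) : g ∈ E(n)}, each equipped with the subspace topology from the finite-dimensional real normed space so(n) × ℝⁿ, are homotopy equivalent topological spaces. -/

import Mathlib

open Matrix

abbrev Mat (n : ℕ) := Matrix (Fin n) (Fin n) ℝ
abbrev Vec (n : ℕ) := Fin n → ℝ

/-- `r` is an orthogonal matrix. -/
def IsOrth {n : ℕ} (r : Mat n) : Prop := r * rᵀ = 1 ∧ rᵀ * r = 1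

/-- `ω` is skew-symmetric. -/
def IsSkew {n : ℕ} (ω : Mat n) : Prop := ωᵀ = -ω

/-- Adjoint action of `(r,d) ∈ E(n)` on `(ω,v) ∈ so(n) × ℝⁿ`. -/
noncomputable def Ad {n : ℕ} (r : Mat n) (d : Vec n) (ω : Mat n) (v : Vec n) :
    Mat n × Vec n :=
  (r * ω * r⁻¹, r *ᵥ v - (r * ω * r⁻¹) *ᵥ d)

/-- The momentum map `μ(p,d) = ½(p dᵀ − d pᵀ)`. -/
noncomputable def mu {n : ℕ} (p d : Vec n) : Mat n :=
  (1/2 : ℝ) • (vecMulVec p d - vecMulVec d p)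

/-- Coadjoint action of `(r,d) ∈ E(n)` on `(L,p) ∈ so(n)* × (ℝⁿ)* ≃ so(n) × ℝⁿ`. -/
noncomputable def CoAd {n : ℕ} (r : Mat n) (d : Vec n) (L : Mat n) (p : Vec n) :
    Mat n × Vec n :=
  (r * L * r⁻¹ + mu (r *ᵥ p) d, r *ᵥ p)

/- ============ Auxiliary material ============ -/

section Aux

open Polynomial

variable {n : ℕ}

lemma tmul_self_zero {m k : Type*} [Fintype m] [Fintype k] {X : Matrix m k ℝ}
    (h : Xᵀ * X = 0) : X = 0 := by
  have hH : Xᴴ = Xᵀ := by ext i j; simp [Matrix.conjTranspose_apply]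
  exact Matrix.conjTranspose_mul_self_eq_zero.mp (by rw [hH]; exact h)

lemma symm_pow_kill {S Y : Mat n} (hS : Sᵀ = S) :
    ∀ j, S ^ (j + 1) * Y = 0 → S * Y = 0 := by
  intro j
  induction j with
  | zero => intro h; simpa using h
  | succ j ih =>
    intro h
    apply ih
    apply tmul_self_zero
    have e : S ^ (j + 1) * (S ^ (j + 1) * Y) = S ^ j * (S ^ (j + 2) * Y) := by
      rw [← mul_assoc, ← pow_add, ← mul_assoc, ← pow_add,
        show j + 1 + (j + 1) = j + (j + 2) by omega]
    calc (S ^ (j + 1) * Y)ᵀ * (S ^ (j + 1) * Y)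
        = Yᵀ * (S ^ (j + 1) * (S ^ (j + 1) * Y)) := by
          rw [Matrix.transpose_mul, Matrix.transpose_pow, hS, mul_assoc]
      _ = Yᵀ * (S ^ j * (S ^ (j + 2) * Y)) := by rw [e]
      _ = 0 := by rw [h, mul_zero, mul_zero]

lemma aeval_mul_comm {A B : Mat n} (h : A * B = B * A) (p : ℝ[X]) :
    aeval A p * B = B * aeval A p := by
  induction p using Polynomial.induction_on' with
  | add p q hp hq => rw [_root_.map_add, add_mul, mul_add, hp, hq]
  | monomial m a =>
    rw [aeval_monomial]
    have hp : A ^ m * B = B * A ^ m := (Commute.pow_left h m)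
    rw [mul_assoc, hp, ← mul_assoc, Algebra.commutes, mul_assoc]

lemma aeval_transpose' (A : Mat n) (p : ℝ[X]) : (aeval A p)ᵀ = aeval Aᵀ p := by
  induction p using Polynomial.induction_on' with
  | add p q hp hq => rw [_root_.map_add, _root_.map_add, Matrix.transpose_add, hp, hq]
  | monomial m a =>
    rw [aeval_monomial, aeval_monomial, Algebra.algebraMap_eq_smul_one, smul_one_mul,
      smul_one_mul, Matrix.transpose_smul, Matrix.transpose_pow]

lemma conj_pow' {r r' : Mat n} (h1 : r * r' = 1) (h2 : r' * r = 1) (A : Mat n) (m : ℕ) :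
    (r * A * r') ^ m = r * A ^ m * r' := by
  induction m with
  | zero => rw [pow_zero, pow_zero, mul_one, h1]
  | succ m ih =>
    rw [pow_succ, ih, pow_succ]
    have hmid : r * A ^ m * r' * (r * A * r') = r * A ^ m * (A * r') := by
      simp only [mul_assoc]
      rw [← mul_assoc r' r, h2, one_mul]
    rw [hmid]
    simp only [mul_assoc]

lemma aeval_conj {r r' : Mat n} (h1 : r * r' = 1) (h2 : r' * r = 1) (A : Mat n) (p : ℝ[X]) :
    aeval (r * A * r') p = r * aeval A p * r' := by
  induction p using Polynomial.induction_on' with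
  | add p q hp hq => rw [_root_.map_add, _root_.map_add, hp, hq, mul_add, add_mul]
  | monomial m a =>
    rw [aeval_monomial, aeval_monomial, conj_pow' h1 h2, Algebra.algebraMap_eq_smul_one,
      smul_one_mul, smul_one_mul, Matrix.mul_smul, Matrix.smul_mul]

lemma aeval_kernel {A : Mat n} {v : Vec n} (h : A *ᵥ v = 0) (p : ℝ[X]) :
    aeval A p *ᵥ v = p.eval 0 • v := by
  induction p using Polynomial.induction_on' with
  | add p q hp hq => rw [_root_.map_add, Matrix.add_mulVec, hp, hq, eval_add, add_smul]
  | monomial m a =>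
    rw [aeval_monomial, Algebra.algebraMap_eq_smul_one, smul_one_mul,
      Matrix.smul_mulVec, eval_monomial]
    cases m with
    | zero => simp
    | succ m =>
      have h0 : A ^ (m + 1) *ᵥ v = 0 := by
        rw [pow_succ, ← Matrix.mulVec_mulVec, h, Matrix.mulVec_zero]
      simp [h0]

/-- existence of a polynomial `s` with `s(0) = 1` and `s(ω²)·ω = 0`. -/
lemma exists_poly (ω : Mat n) (hω : ωᵀ = -ω) :
    ∃ s : ℝ[X], s.eval 0 = 1 ∧ aeval (ω * ω) s * ω = 0 := by
  classical
  have hAT : (ω * ω)ᵀ = ω * ω := by rw [Matrix.transpose_mul, hω, neg_mul_neg]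
  obtain ⟨g, hc, hAg⟩ : ∃ g : ℝ[X], g.eval 0 ≠ 0 ∧ (ω * ω) * aeval (ω * ω) g = 0 := by
    refine ⟨(ω * ω).charpoly /ₘ (X - C 0) ^ ((ω * ω).charpoly.rootMultiplicity 0),
      eval_divByMonic_pow_rootMultiplicity_ne_zero 0 (ω * ω).charpoly_monic.ne_zero, ?_⟩
    have hk : (ω * ω) ^ ((ω * ω).charpoly.rootMultiplicity 0) *
        aeval (ω * ω) ((ω * ω).charpoly /ₘ (X - C 0) ^ ((ω * ω).charpoly.rootMultiplicity 0))
        = 0 := by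
      have h0 := (ω * ω).aeval_self_charpoly
      conv_lhs at h0 =>
        rw [← pow_mul_divByMonic_rootMultiplicity_eq (ω * ω).charpoly 0]
      rw [_root_.map_mul, _root_.map_pow, _root_.map_sub, aeval_X, aeval_C,
        _root_.map_zero, sub_zero] at h0
      exact h0
    revert hk
    generalize ((ω * ω).charpoly.rootMultiplicity 0) = k
    intro hk
    cases k with
    | zero => rw [pow_zero, one_mul] at hk; rw [hk, mul_zero]
    | succ j => exact symm_pow_kill hAT j hk
  set gA := aeval (ω * ω) g with hgA
  have hgAT : gAᵀ = gA := by rw [hgA, aeval_transpose', hAT]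
  have hcomm : gA * ω = ω * gA := aeval_mul_comm (by rw [mul_assoc]) g
  have hAcomm : gA * (ω * ω) = ω * ω * gA := aeval_mul_comm rfl g
  have H : gA * (gA * (ω * ω)) = 0 := by
    rw [hAcomm, ← mul_assoc, hAcomm, hAg, zero_mul]
  have hgω : gA * ω = 0 := by
    apply tmul_self_zero
    have h1 : (gA * ω)ᵀ * (gA * ω) = -(gA * ω * (gA * ω)) := by
      rw [Matrix.transpose_mul, hgAT, hω, Matrix.neg_mul, ← hcomm, Matrix.neg_mul]
    have h2 : gA * ω * (gA * ω) = gA * (gA * (ω * ω)) := by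
      rw [mul_assoc, ← mul_assoc ω gA ω, ← hcomm, mul_assoc gA ω ω]
    rw [h1, h2, H, neg_zero]
  refine ⟨C (g.eval 0)⁻¹ * g, by simp [inv_mul_cancel₀ hc], ?_⟩
  rw [_root_.map_mul, aeval_C, mul_assoc, hgω, mul_zero]

lemma vecMulVec_mulVec' (a b c : Vec n) : vecMulVec a b *ᵥ c = (b ⬝ᵥ c) • a := by
  funext i
  simp only [Matrix.mulVec, dotProduct, vecMulVec_apply, Pi.smul_apply, smul_eq_mul]
  rw [Finset.sum_mul]
  exact Finset.sum_congr rfl fun j _ => by ring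

lemma mu_zero_right (p : Vec n) : mu p 0 = 0 := by
  ext i j
  simp [mu, vecMulVec_apply]

lemma mu_zero_left (d : Vec n) : mu 0 d = 0 := by
  ext i j
  simp [mu, vecMulVec_apply]

lemma mu_smul (p : Vec n) (c : ℝ) (d : Vec n) : mu p (c • d) = c • mu p d := by
  ext i j
  simp only [mu, Matrix.smul_apply, Matrix.sub_apply, vecMulVec_apply, Pi.smul_apply,
    smul_eq_mul]
  ring

lemma mu_apply' (p d : Vec n) (i j : Fin n) :
    mu p d i j = (1/2 : ℝ) * (p i * d j - d i * p j) := by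
  simp only [mu, Matrix.smul_apply, Matrix.sub_apply, vecMulVec_apply, smul_eq_mul]

end Aux

/- ============ the retraction maps and their key properties ============ -/

/-- The spectral-projection-based retraction on the adjoint side. -/
noncomputable def PhiF {n : ℕ} (s : Polynomial ℝ) (M : Mat n) : Mat n :=
  Polynomial.aeval (M * M) s

/-- The fiber-extraction map on the coadjoint side. -/
noncomputable def FmF {n : ℕ} (v : Vec n) (x : Mat n × Vec n) : Mat n :=
  (v ⬝ᵥ v)⁻¹ • (vecMulVec (x.1 *ᵥ x.2) x.2 - vecMulVec x.2 (x.1 *ᵥ x.2))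

section Keys

open Polynomial

variable {n : ℕ} {ω : Mat n} {v : Vec n} {s : ℝ[X]} {r : Mat n}

lemma orth_inv (hr : IsOrth r) : r * r⁻¹ = 1 ∧ r⁻¹ * r = 1 := by
  have hri : r⁻¹ = rᵀ := Matrix.inv_eq_right_inv hr.1
  exact ⟨by rw [hri]; exact hr.1, by rw [hri]; exact hr.2⟩

lemma phi_conj (hr : IsOrth r) :
    PhiF s (r * ω * r⁻¹) = r * aeval (ω * ω) s * r⁻¹ := by
  obtain ⟨h1, h2⟩ := orth_inv hr
  have hsq : (r * ω * r⁻¹) * (r * ω * r⁻¹) = r * (ω * ω) * r⁻¹ := by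
    simp only [mul_assoc]
    rw [← mul_assoc r⁻¹ r, h2, one_mul]
  rw [PhiF, hsq, aeval_conj h1 h2]

lemma key2 (hsv : aeval (ω * ω) s *ᵥ v = v) (hr : IsOrth r) :
    PhiF s (r * ω * r⁻¹) *ᵥ (r *ᵥ v) = r *ᵥ v := by
  obtain ⟨h1, h2⟩ := orth_inv hr
  rw [phi_conj hr, Matrix.mulVec_mulVec]
  have h3 : r * aeval (ω * ω) s * r⁻¹ * r = r * aeval (ω * ω) s := by
    rw [mul_assoc, h2, mul_one]
  rw [h3, ← Matrix.mulVec_mulVec, hsv]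

lemma key1 (hsv : aeval (ω * ω) s *ᵥ v = v) (hsω : aeval (ω * ω) s * ω = 0)
    (hr : IsOrth r) (d : Vec n) :
    PhiF s (r * ω * r⁻¹) *ᵥ (r *ᵥ v - (r * ω * r⁻¹) *ᵥ d) = r *ᵥ v := by
  obtain ⟨h1, h2⟩ := orth_inv hr
  rw [Matrix.mulVec_sub, key2 hsv hr]
  have hz : PhiF s (r * ω * r⁻¹) * (r * ω * r⁻¹) = 0 := by
    rw [phi_conj hr]
    simp only [mul_assoc]
    rw [← mul_assoc r⁻¹ r, h2, one_mul, ← mul_assoc (aeval (ω * ω) s) ω r⁻¹,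
      hsω, Matrix.zero_mul, Matrix.mul_zero]
  rw [Matrix.mulVec_mulVec, hz, Matrix.zero_mulVec, sub_zero]

lemma base_ker (hωv : ω *ᵥ v = 0) (hr : IsOrth r) :
    (r * ω * r⁻¹) *ᵥ (r *ᵥ v) = 0 := by
  obtain ⟨h1, h2⟩ := orth_inv hr
  rw [Matrix.mulVec_mulVec]
  have h3 : r * ω * r⁻¹ * r = r * ω := by rw [mul_assoc, h2, mul_one]
  rw [h3, ← Matrix.mulVec_mulVec, hωv, Matrix.mulVec_zero]

lemma key4 (hωv : ω *ᵥ v = 0) (hr : IsOrth r) :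
    FmF v (r * ω * r⁻¹, r *ᵥ v) = 0 := by
  rw [FmF]
  simp only
  rw [base_ker hωv hr]
  ext i j
  simp [vecMulVec_apply]

lemma normSq_inv (hr : IsOrth r) : (r *ᵥ v) ⬝ᵥ (r *ᵥ v) = v ⬝ᵥ v := by
  obtain ⟨h1, h2⟩ := orth_inv hr
  have hri : r⁻¹ = rᵀ := Matrix.inv_eq_right_inv hr.1
  rw [Matrix.dotProduct_mulVec, ← Matrix.mulVec_transpose, Matrix.mulVec_mulVec,
    ← hri, h2, Matrix.one_mulVec]

lemma key3 (hωv : ω *ᵥ v = 0) (hr : IsOrth r) (d : Vec n) :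
    FmF v (r * ω * r⁻¹ + mu (r *ᵥ v) d, r *ᵥ v) = mu (r *ᵥ v) d := by
  have hLp : (r * ω * r⁻¹ + mu (r *ᵥ v) d) *ᵥ (r *ᵥ v)
      = (1/2 : ℝ) • ((d ⬝ᵥ (r *ᵥ v)) • (r *ᵥ v) - ((r *ᵥ v) ⬝ᵥ (r *ᵥ v)) • d) := by
    rw [Matrix.add_mulVec, base_ker hωv hr, zero_add, mu, Matrix.smul_mulVec,
      Matrix.sub_mulVec, vecMulVec_mulVec', vecMulVec_mulVec']
  by_cases hv : v = 0
  · subst hv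
    rw [Matrix.mulVec_zero, mu_zero_left, FmF]
    simp only
    ext i j
    simp [vecMulVec_apply]
  · have hvv : v ⬝ᵥ v ≠ 0 := fun h => hv (dotProduct_self_eq_zero.mp h)
    rw [FmF]
    simp only
    ext i j
    rw [Matrix.smul_apply, Matrix.sub_apply, vecMulVec_apply, vecMulVec_apply, hLp,
      mu_apply']
    simp only [Pi.smul_apply, Pi.sub_apply, smul_eq_mul, normSq_inv hr]
    field_simp
    ring

end Keys

/- ============ main theorem ============ -/

/-- For `(ω,v) ∈ Δ`, the adjoint and coadjoint orbits of `E(n)` through `(ω,v)` are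
homotopy equivalent. -/
theorem stmt8 {n : ℕ} (ω : Mat n) (hω : IsSkew ω) (v : Vec n) (hωv : ω *ᵥ v = 0) :
    Nonempty
      (ContinuousMap.HomotopyEquiv
        {x : Mat n × Vec n | ∃ (r : Mat n) (d : Vec n), IsOrth r ∧ Ad r d ω v = x}
        {x : Mat n × Vec n | ∃ (r : Mat n) (d : Vec n), IsOrth r ∧ CoAd r d ω v = x}) := by
  classical
  obtain ⟨s, hs0, hsω⟩ := exists_poly ω hω
  have hAv : (ω * ω) *ᵥ v = 0 := by
    rw [← Matrix.mulVec_mulVec, hωv, Matrix.mulVec_zero]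
  have hsv : Polynomial.aeval (ω * ω) s *ᵥ v = v := by
    rw [aeval_kernel hAv s, hs0, one_smul]
  -- continuity facts
  have hPhiCont : Continuous (PhiF (n := n) s) :=
    (Polynomial.continuous_aeval s).comp (continuous_id.matrix_mul continuous_id)
  have hFmCont : Continuous (FmF (n := n) v) := by
    have h1 : Continuous fun x : Mat n × Vec n => x.1 *ᵥ x.2 :=
      continuous_fst.matrix_mulVec continuous_snd
    exact ((h1.matrix_vecMulVec continuous_snd).sub
      (continuous_snd.matrix_vecMulVec h1)).const_smul ((v ⬝ᵥ v)⁻¹)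
  -- membership lemmas
  have fmem : ∀ x : Mat n × Vec n, (∃ (r : Mat n) (d : Vec n), IsOrth r ∧ Ad r d ω v = x) →
      ∃ (r : Mat n) (d : Vec n), IsOrth r ∧ CoAd r d ω v = (x.1, PhiF s x.1 *ᵥ x.2) := by
    rintro x ⟨r, d, hr, hx⟩
    refine ⟨r, 0, hr, ?_⟩
    rw [← hx]
    show (r * ω * r⁻¹ + mu (r *ᵥ v) 0, r *ᵥ v)
      = (r * ω * r⁻¹, PhiF s (r * ω * r⁻¹) *ᵥ (r *ᵥ v - (r * ω * r⁻¹) *ᵥ d))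
    rw [mu_zero_right, add_zero, key1 hsv hsω hr d]
  have gmem : ∀ y : Mat n × Vec n, (∃ (r : Mat n) (d : Vec n), IsOrth r ∧ CoAd r d ω v = y) →
      ∃ (r : Mat n) (d : Vec n), IsOrth r ∧ Ad r d ω v = (y.1 - FmF v y, y.2) := by
    rintro y ⟨r, d, hr, hy⟩
    refine ⟨r, 0, hr, ?_⟩
    rw [← hy]
    show (r * ω * r⁻¹, r *ᵥ v - (r * ω * r⁻¹) *ᵥ 0)
      = (r * ω * r⁻¹ + mu (r *ᵥ v) d - FmF v (r * ω * r⁻¹ + mu (r *ᵥ v) d, r *ᵥ v), r *ᵥ v)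
    rw [key3 hωv hr d, add_sub_cancel_right, Matrix.mulVec_zero, sub_zero]
  have hmemA : ∀ (t : ℝ) (x : Mat n × Vec n),
      (∃ (r : Mat n) (d : Vec n), IsOrth r ∧ Ad r d ω v = x) →
      ∃ (r : Mat n) (d : Vec n), IsOrth r ∧ Ad r d ω v
        = (x.1, x.2 - (1 - t) • (x.2 - PhiF s x.1 *ᵥ x.2)) := by
    rintro t x ⟨r, d, hr, hx⟩
    refine ⟨r, t • d, hr, ?_⟩
    rw [← hx]
    show (r * ω * r⁻¹, r *ᵥ v - (r * ω * r⁻¹) *ᵥ (t • d))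
      = (r * ω * r⁻¹, r *ᵥ v - (r * ω * r⁻¹) *ᵥ d
          - (1 - t) • (r *ᵥ v - (r * ω * r⁻¹) *ᵥ d
            - PhiF s (r * ω * r⁻¹) *ᵥ (r *ᵥ v - (r * ω * r⁻¹) *ᵥ d)))
    rw [key1 hsv hsω hr d, Matrix.mulVec_smul]
    refine Prod.ext rfl ?_
    show r *ᵥ v - t • (r * ω * r⁻¹) *ᵥ d
      = r *ᵥ v - (r * ω * r⁻¹) *ᵥ d - (1 - t) • (r *ᵥ v - (r * ω * r⁻¹) *ᵥ d - r *ᵥ v)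
    module
  have hmemC : ∀ (t : ℝ) (y : Mat n × Vec n),
      (∃ (r : Mat n) (d : Vec n), IsOrth r ∧ CoAd r d ω v = y) →
      ∃ (r : Mat n) (d : Vec n), IsOrth r ∧ CoAd r d ω v
        = (y.1 - (1 - t) • FmF v y, y.2) := by
    rintro t y ⟨r, d, hr, hy⟩
    refine ⟨r, t • d, hr, ?_⟩
    rw [← hy]
    show (r * ω * r⁻¹ + mu (r *ᵥ v) (t • d), r *ᵥ v)
      = (r * ω * r⁻¹ + mu (r *ᵥ v) d
          - (1 - t) • FmF v (r * ω * r⁻¹ + mu (r *ᵥ v) d, r *ᵥ v), r *ᵥ v)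
    rw [key3 hωv hr d, mu_smul]
    refine Prod.ext ?_ rfl
    show r * ω * r⁻¹ + t • mu (r *ᵥ v) d
      = r * ω * r⁻¹ + mu (r *ᵥ v) d - (1 - t) • mu (r *ᵥ v) d
    module
  -- the continuous maps
  refine ⟨⟨⟨fun x => ⟨(x.val.1, PhiF s x.val.1 *ᵥ x.val.2), fmem x.val x.property⟩, ?_⟩,
          ⟨fun y => ⟨(y.val.1 - FmF v y.val, y.val.2), gmem y.val y.property⟩, ?_⟩,
          ⟨?_⟩, ⟨?_⟩⟩⟩
  · refine Continuous.subtype_mk ?_ _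
    have hbase : Continuous fun x : {x : Mat n × Vec n |
        ∃ (r : Mat n) (d : Vec n), IsOrth r ∧ Ad r d ω v = x} => (x : Mat n × Vec n) :=
      continuous_subtype_val
    exact hbase.fst.prodMk ((hPhiCont.comp hbase.fst).matrix_mulVec hbase.snd)
  · refine Continuous.subtype_mk ?_ _
    have hbase : Continuous fun y : {x : Mat n × Vec n |
        ∃ (r : Mat n) (d : Vec n), IsOrth r ∧ CoAd r d ω v = x} => (y : Mat n × Vec n) :=
      continuous_subtype_val
    exact (hbase.fst.sub (hFmCont.comp hbase)).prodMk hbase.snd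
  · -- gmap ∘ fmap homotopic to id on the adjoint orbit
    refine
      { toFun := fun q =>
          ⟨((q.2 : Mat n × Vec n).1, (q.2 : Mat n × Vec n).2 - (1 - (q.1 : ℝ)) •
              ((q.2 : Mat n × Vec n).2
                - PhiF s (q.2 : Mat n × Vec n).1 *ᵥ (q.2 : Mat n × Vec n).2)),
           hmemA (q.1 : ℝ) (q.2 : Mat n × Vec n) q.2.property⟩
        continuous_toFun := ?_
        map_zero_left := ?_
        map_one_left := ?_ }
    · refine Continuous.subtype_mk ?_ _
      have hx : Continuous fun q : unitInterval × {x : Mat n × Vec n |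
          ∃ (r : Mat n) (d : Vec n), IsOrth r ∧ Ad r d ω v = x} => ((q.2 : Mat n × Vec n)) :=
        continuous_subtype_val.comp continuous_snd
      have ht : Continuous fun q : unitInterval × {x : Mat n × Vec n |
          ∃ (r : Mat n) (d : Vec n), IsOrth r ∧ Ad r d ω v = x} => (1 - (q.1 : ℝ)) :=
        continuous_const.sub (continuous_induced_dom.comp continuous_fst)
      exact hx.fst.prodMk
        (hx.snd.sub (ht.smul (hx.snd.sub ((hPhiCont.comp hx.fst).matrix_mulVec hx.snd))))
    · intro x
      apply Subtype.ext
      obtain ⟨r, d, hr, hx⟩ := x.property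
      refine Prod.ext ?_ ?_
      · show (x : Mat n × Vec n).1
          = (x : Mat n × Vec n).1
            - FmF v ((x : Mat n × Vec n).1, PhiF s (x : Mat n × Vec n).1 *ᵥ (x : Mat n × Vec n).2)
        rw [← hx]
        show r * ω * r⁻¹ = r * ω * r⁻¹
          - FmF v (r * ω * r⁻¹, PhiF s (r * ω * r⁻¹) *ᵥ (r *ᵥ v - (r * ω * r⁻¹) *ᵥ d))
        rw [key1 hsv hsω hr d, key4 hωv hr, sub_zero]
      · show (x : Mat n × Vec n).2 - (1 - ((0 : unitInterval) : ℝ)) •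
            ((x : Mat n × Vec n).2 - PhiF s (x : Mat n × Vec n).1 *ᵥ (x : Mat n × Vec n).2)
          = PhiF s (x : Mat n × Vec n).1 *ᵥ (x : Mat n × Vec n).2
        rw [Set.Icc.coe_zero]
        module
    · intro x
      apply Subtype.ext
      refine Prod.ext rfl ?_
      show (x : Mat n × Vec n).2 - (1 - ((1 : unitInterval) : ℝ)) •
          ((x : Mat n × Vec n).2 - PhiF s (x : Mat n × Vec n).1 *ᵥ (x : Mat n × Vec n).2)
        = (x : Mat n × Vec n).2
      rw [Set.Icc.coe_one]
      module
  · -- fmap ∘ gmap homotopic to id on the coadjoint orbit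
    refine
      { toFun := fun q =>
          ⟨((q.2 : Mat n × Vec n).1 - (1 - (q.1 : ℝ)) • FmF v (q.2 : Mat n × Vec n),
            (q.2 : Mat n × Vec n).2),
           hmemC (q.1 : ℝ) (q.2 : Mat n × Vec n) q.2.property⟩
        continuous_toFun := ?_
        map_zero_left := ?_
        map_one_left := ?_ }
    · refine Continuous.subtype_mk ?_ _
      have hy : Continuous fun q : unitInterval × {x : Mat n × Vec n |
          ∃ (r : Mat n) (d : Vec n), IsOrth r ∧ CoAd r d ω v = x} =>
          ((q.2 : Mat n × Vec n)) :=
        continuous_subtype_val.comp continuous_snd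
      have ht : Continuous fun q : unitInterval × {x : Mat n × Vec n |
          ∃ (r : Mat n) (d : Vec n), IsOrth r ∧ CoAd r d ω v = x} => (1 - (q.1 : ℝ)) :=
        continuous_const.sub (continuous_induced_dom.comp continuous_fst)
      exact (hy.fst.sub (ht.smul (hFmCont.comp hy))).prodMk hy.snd
    · intro y
      apply Subtype.ext
      obtain ⟨r, d, hr, hy⟩ := y.property
      have h3 : FmF v (y : Mat n × Vec n) = mu (r *ᵥ v) d := by
        rw [← hy]; exact key3 hωv hr d
      have h4 : (y : Mat n × Vec n).1 - FmF v (y : Mat n × Vec n) = r * ω * r⁻¹ := by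
        rw [h3, ← hy]
        show r * ω * r⁻¹ + mu (r *ᵥ v) d - mu (r *ᵥ v) d = r * ω * r⁻¹
        rw [add_sub_cancel_right]
      refine Prod.ext ?_ ?_
      · show (y : Mat n × Vec n).1 - (1 - ((0 : unitInterval) : ℝ)) • FmF v (y : Mat n × Vec n)
          = (y : Mat n × Vec n).1 - FmF v (y : Mat n × Vec n)
        rw [Set.Icc.coe_zero]
        module
      · show (y : Mat n × Vec n).2
          = PhiF s ((y : Mat n × Vec n).1 - FmF v (y : Mat n × Vec n)) *ᵥ (y : Mat n × Vec n).2
        rw [h4]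
        have h5 : (y : Mat n × Vec n).2 = r *ᵥ v := by rw [← hy]; rfl
        rw [h5, key2 hsv hr]
    · intro y
      apply Subtype.ext
      refine Prod.ext ?_ rfl
      show (y : Mat n × Vec n).1 - (1 - ((1 : unitInterval) : ℝ)) • FmF v (y : Mat n × Vec n)
        = (y : Mat n × Vec n).1
      rw [Set.Icc.coe_one]
      module
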